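/- Let a, c ∈ ℝⁿ be nonzero and linearly independent, b_a, b_c ∈ ℝ, and let x, x* ∈ ℝⁿ satisfy ⟨c, x⟩ = b_c, ⟨a, x*⟩ = b_a, ⟨c, x*⟩ = b_c. With β = ⟨a,c⟩(⟨a,x⟩−b_a)/(‖a‖²‖c‖²−⟨a,c⟩²), w = x + βc, and x⁺ = w − ((⟨a,w⟩−b_a)/‖a‖²)a, one has the exact error identity ‖x⁺ − x*‖² = ‖x − x*‖² − (1/(1 − δ_{ac}²)) · (⟨a,x⟩ − b_a)²/‖a‖², where δ_{ac} = ⟨a,c⟩/(‖a‖‖c‖). -/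

import Mathlib

open RealInnerProductSpace

lemma stmt_9_aux {E : Type*} [NormedAddCommGroup E] [InnerProductSpace ℝ E]
    (u a c : E) (β s : ℝ) :
    ‖u + β • c - s • a‖ ^ 2 =
      ‖u‖ ^ 2 + β ^ 2 * ‖c‖ ^ 2 + s ^ 2 * ‖a‖ ^ 2 + 2 * β * ⟪c, u⟫ - 2 * s * ⟪a, u⟫
        - 2 * β * s * ⟪a, c⟫ := by
  rw [@norm_sub_sq_real, @norm_add_sq_real]
  simp only [real_inner_smul_right, real_inner_smul_left, inner_add_left, norm_smul,
    Real.norm_eq_abs, mul_pow, sq_abs]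
  rw [real_inner_comm u c, real_inner_comm a c, real_inner_comm u a]
  ring

lemma stmt_9_scalar (N A C t r B S : ℝ) (hA : A ≠ 0) (hC : C ≠ 0)
    (hD : t ^ 2 < A ^ 2 * C ^ 2)
    (hB : B = t * r / (A ^ 2 * C ^ 2 - t ^ 2)) (hS : S = (r + B * t) / A ^ 2) :
    N + B ^ 2 * C ^ 2 + S ^ 2 * A ^ 2 + 2 * B * 0 - 2 * S * r - 2 * B * S * t
      = N - 1 / (1 - (t / (A * C)) ^ 2) * (r ^ 2 / A ^ 2) := by
  have hDne : A ^ 2 * C ^ 2 - t ^ 2 ≠ 0 := by nlinarith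
  have hACpos : (0 : ℝ) < (A * C) ^ 2 := by
    rcases (sq_nonneg (A * C)).lt_or_eq with h | h
    · exact h
    · exact absurd (pow_eq_zero_iff (by norm_num) |>.mp h.symm) (mul_ne_zero hA hC)
  have hlt : (t / (A * C)) ^ 2 < 1 := by
    rw [div_pow, div_lt_one hACpos]; nlinarith
  have hδne : 1 - (t / (A * C)) ^ 2 ≠ 0 := by linarith
  have key : 1 / (1 - (t / (A * C)) ^ 2) * (r ^ 2 / A ^ 2)
      = r ^ 2 * C ^ 2 / (A ^ 2 * C ^ 2 - t ^ 2) := by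
    have e1 : 1 - (t / (A * C)) ^ 2 = (A ^ 2 * C ^ 2 - t ^ 2) / (A ^ 2 * C ^ 2) := by
      rw [div_pow]
      rw [eq_div_iff (by intro h; exact hDne (by nlinarith))]
      field_simp
    rw [e1, one_div, inv_div, div_mul_div_comm,
      div_eq_div_iff (by exact mul_ne_zero hDne (pow_ne_zero 2 hA)) hDne]
    ring
  rw [key]
  subst hS
  subst hB
  field_simp
  ring

set_option maxHeartbeats 1600000 in
/-- Exact one-step error identity for the multi-step inertial Kaczmarz step:
`‖x⁺ − x*‖² = ‖x − x*‖² − (1/(1 − δ²)) (⟨a,x⟩ − b_a)²/‖a‖²`, where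
`δ = ⟨a,c⟩/(‖a‖‖c‖)`. -/
theorem stmt_9 {n : ℕ} (a c : EuclideanSpace ℝ (Fin n)) (ha : a ≠ 0) (hc : c ≠ 0)
    (hind : LinearIndependent ℝ ![a, c]) (ba bc : ℝ)
    (x xs : EuclideanSpace ℝ (Fin n))
    (hx : ⟪c, x⟫ = bc) (hxa : ⟪a, xs⟫ = ba) (hxc : ⟪c, xs⟫ = bc) :
    let β : ℝ := ⟪a, c⟫ * (⟪a, x⟫ - ba) / (‖a‖ ^ 2 * ‖c‖ ^ 2 - ⟪a, c⟫ ^ 2)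
    let w := x + β • c
    let xp := w - ((⟪a, w⟫ - ba) / ‖a‖ ^ 2) • a
    let δ : ℝ := ⟪a, c⟫ / (‖a‖ * ‖c‖)
    ‖xp - xs‖ ^ 2 = ‖x - xs‖ ^ 2 - (1 / (1 - δ ^ 2)) * ((⟪a, x⟫ - ba) ^ 2 / ‖a‖ ^ 2) := by
  intro β w xp δ
  have ha' : ‖a‖ ≠ 0 := norm_ne_zero_iff.mpr ha
  have hc' : ‖c‖ ≠ 0 := norm_ne_zero_iff.mpr hc
  have hpair := LinearIndependent.pair_iff.mp hind
  have h1 : ⟪a, c⟫ < ‖a‖ * ‖c‖ := by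
    rw [inner_lt_norm_mul_iff_real]
    intro h
    have := hpair ‖c‖ (-‖a‖) (by rw [neg_smul, h]; abel)
    exact hc' this.1
  have h2 : -(‖a‖ * ‖c‖) < ⟪a, c⟫ := by
    have : ⟪a, -c⟫ < ‖a‖ * ‖-c‖ := by
      rw [inner_lt_norm_mul_iff_real]
      intro h
      rw [norm_neg] at h
      have := hpair ‖c‖ ‖a‖ (by rw [h]; simp)
      exact hc' this.1
    simp only [inner_neg_right, norm_neg] at this
    linarith
  have hD : ⟪a, c⟫ ^ 2 < ‖a‖ ^ 2 * ‖c‖ ^ 2 := by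
    have habs := abs_lt.mpr ⟨h2, h1⟩
    calc ⟪a, c⟫ ^ 2 = |⟪a, c⟫| ^ 2 := (sq_abs _).symm
      _ < (‖a‖ * ‖c‖) ^ 2 := by
          apply pow_lt_pow_left₀ habs (abs_nonneg _)
          norm_num
      _ = ‖a‖ ^ 2 * ‖c‖ ^ 2 := by ring
  have hDne : ‖a‖ ^ 2 * ‖c‖ ^ 2 - ⟪a, c⟫ ^ 2 ≠ 0 := by linarith
  set r : ℝ := ⟪a, x⟫ - ba with hr
  set t : ℝ := ⟪a, c⟫ with ht
  have hwa : ⟪a, w⟫ = ⟪a, x⟫ + β * t := by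
    simp [w, inner_add_right, inner_smul_right, ht]
  have hrepr : xp - xs = (x - xs) + β • c - ((r + β * t) / ‖a‖ ^ 2) • a := by
    simp only [xp, w, hwa, hr]
    module
  have hua : ⟪a, x - xs⟫ = r := by rw [inner_sub_right, hxa, hr]
  have huc : ⟪c, x - xs⟫ = 0 := by rw [inner_sub_right, hx, hxc, sub_self]
  rw [hrepr, stmt_9_aux, hua, huc, ← ht]
  have hβ : β = t * r / (‖a‖ ^ 2 * ‖c‖ ^ 2 - t ^ 2) := rfl
  have hδ : δ = t / (‖a‖ * ‖c‖) := rfl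
  rw [hδ]
  exact stmt_9_scalar (‖x - xs‖ ^ 2) ‖a‖ ‖c‖ t r β ((r + β * t) / ‖a‖ ^ 2) ha' hc' hD hβ rfl
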